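/- (Well-definedness of the algebraic homological filling function) Let G be a group and n ≥ 1. Let (F_*, ∂_*) and (P_*, δ_*) be two FP_{n+1}-resolutions of ℤ over ℤ[G], each equipped with chosen filling norms on its degree-n and degree-(n+1) modules, and let FV_{F_*}, FV_{P_*} : ℕ → ℕ∞ be the associated filling functions, FV_{F_*}(k) = sup{‖γ‖_{∂_{n+1}} : γ ∈ ker ∂_n, ‖γ‖_{F_n} ≤ k} and similarly for FV_{P_*}. Then FV_{F_*} ∼ FV_{P_*}, i.e. FV_{F_*} ⪯ FV_{P_*} and FV_{P_*} ⪯ FV_{F_*}. -/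

import Mathlib

/-- The ℓ1-norm on the based finitely generated free `ℤ[G]`-module `Fin r →₀ ℤ[G]`. -/
noncomputable def l1 {G : Type*} [Group G] {r : ℕ}
    (x : Fin r →₀ MonoidAlgebra ℤ G) : ℕ :=
  x.sum fun _ a => Finsupp.sum a.coeff fun _ z => z.natAbs

/-- The filling norm on `M` induced by a surjection `η` from a based finitely
generated free `ℤ[G]`-module: `‖m‖_η = min { ‖x‖₁ : η x = m }`. -/
noncomputable def fillNorm {G : Type*} [Group G] {r : ℕ}
    {M : Type*} [AddCommGroup M] [Module (MonoidAlgebra ℤ G) M]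
    (η : (Fin r →₀ MonoidAlgebra ℤ G) →ₗ[MonoidAlgebra ℤ G] M) (m : M) : ℕ :=
  sInf {n : ℕ | ∃ x, η x = m ∧ l1 x = n}

/-- Given a boundary map `d : A → B` (playing the role of `∂_{n+1}`) and a filling
norm on `A` induced by `η`, the filling norm `‖γ‖_{∂_{n+1}} = min {‖μ‖_A : d μ = γ}`. -/
noncomputable def bdryNorm {G : Type*} [Group G]
    {A B : Type*} [AddCommGroup A] [Module (MonoidAlgebra ℤ G) A]
    [AddCommGroup B] [Module (MonoidAlgebra ℤ G) B] {r : ℕ}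
    (d : A →ₗ[MonoidAlgebra ℤ G] B)
    (η : (Fin r →₀ MonoidAlgebra ℤ G) →ₗ[MonoidAlgebra ℤ G] A) (γ : B) : ℕ :=
  sInf {c : ℕ | ∃ μ, d μ = γ ∧ fillNorm η μ = c}

/-- The filling function associated to `P_{n+1} →^{d1} P_n →^{dn} P_{n-1}` and
filling norms induced by `ηn` (on `P_n`) and `η1` (on `P_{n+1}`):
`FV(k) = sup {‖γ‖_{∂_{n+1}} : γ ∈ ker ∂_n, ‖γ‖_{P_n} ≤ k}`. -/
noncomputable def FVfun {G : Type*} [Group G]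
    {A B Cc : Type*} [AddCommGroup A] [Module (MonoidAlgebra ℤ G) A]
    [AddCommGroup B] [Module (MonoidAlgebra ℤ G) B]
    [AddCommGroup Cc] [Module (MonoidAlgebra ℤ G) Cc] {r1 rn : ℕ}
    (d1 : A →ₗ[MonoidAlgebra ℤ G] B) (dn : B →ₗ[MonoidAlgebra ℤ G] Cc)
    (ηn : (Fin rn →₀ MonoidAlgebra ℤ G) →ₗ[MonoidAlgebra ℤ G] B)
    (η1 : (Fin r1 →₀ MonoidAlgebra ℤ G) →ₗ[MonoidAlgebra ℤ G] A)
    (k : ℕ) : ℕ∞ :=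
  sSup {c : ℕ∞ | ∃ γ ∈ LinearMap.ker dn,
    fillNorm ηn γ ≤ k ∧ c = (bdryNorm d1 η1 γ : ℕ∞)}

/-- `f ⪯ g` : there is `C > 0` with `f(k) ≤ C·g(C·k + C) + C·k + C` for all `k`. -/
def FPreceq (f g : ℕ → ℕ∞) : Prop :=
  ∃ C : ℕ, 0 < C ∧ ∀ k : ℕ,
    f k ≤ (C : ℕ∞) * g (C * k + C) + (C : ℕ∞) * (k : ℕ∞) + (C : ℕ∞)

/-- `ℤ` with the trivial `G`-action, as a `ℤ[G]`-module via the augmentation map. -/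
def TrivialZ (G : Type*) [Group G] : Type := ℤ

noncomputable instance (G : Type*) [Group G] : AddCommGroup (TrivialZ G) :=
  inferInstanceAs (AddCommGroup ℤ)

noncomputable instance (G : Type*) [Group G] : Module (MonoidAlgebra ℤ G) (TrivialZ G) :=
  Module.compHom ℤ ((MonoidAlgebra.lift ℤ ℤ G) 1).toRingHom


section AuxLemmas
set_option linter.unusedSectionVars false

section helpers
variable {α M : Type*} [AddCommGroup M]

lemma fsum_le_add (N : M → ℕ) (h0 : N 0 = 0) (hN : ∀ x y : M, N (x + y) ≤ N x + N y)
    (f g : α →₀ M) :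
    (f + g).sum (fun _ m => N m) ≤ f.sum (fun _ m => N m) + g.sum (fun _ m => N m) := by
  classical
  rw [Finsupp.sum_of_support_subset (f + g) Finsupp.support_add _ (fun i _ => h0),
      Finsupp.sum_of_support_subset f Finset.subset_union_left _ (fun i _ => h0),
      Finsupp.sum_of_support_subset g Finset.subset_union_right _ (fun i _ => h0),
      ← Finset.sum_add_distrib]
  exact Finset.sum_le_sum fun a _ => by simpa using hN (f a) (g a)

lemma fsum_neg (N : M → ℕ) (hN : ∀ x : M, N (-x) = N x) (f : α →₀ M) :
    (-f).sum (fun _ m => N m) = f.sum (fun _ m => N m) := by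
  rw [Finsupp.sum, Finsupp.sum, Finsupp.support_neg]
  exact Finset.sum_congr rfl fun a _ => by simp [hN]

lemma fsum_single_add (N : M → ℕ) (h0 : N 0 = 0) {a : α} {b : M} {f : α →₀ M}
    (ha : a ∉ f.support) :
    (Finsupp.single a b + f).sum (fun _ m => N m) = N b + f.sum (fun _ m => N m) := by
  classical
  have hsub : (Finsupp.single a b + f).support ⊆ insert a f.support := by
    refine Finsupp.support_add.trans ?_
    exact Finset.union_subset (Finsupp.support_single_subset.trans (by simp))
      (Finset.subset_insert _ _)
  rw [Finsupp.sum_of_support_subset _ hsub _ (fun i _ => h0),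
      Finset.sum_insert (by simpa using ha)]
  have hfa : f a = 0 := Finsupp.notMem_support_iff.mp ha
  congr 1
  · simp [hfa]
  · rw [Finsupp.sum]
    refine Finset.sum_congr rfl fun x hx => ?_
    have hxa : x ≠ a := by rintro rfl; exact ha hx
    simp [Finsupp.single_apply, hxa.symm]

end helpers

section nR
variable {G : Type*} [Group G]

/-- ℓ1 norm on the group ring. -/
noncomputable def nR (a : MonoidAlgebra ℤ G) : ℕ := a.coeff.sum fun _ z => z.natAbs

lemma nR_zero : nR (0 : MonoidAlgebra ℤ G) = 0 := by simp [nR]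

lemma nR_add (a b : MonoidAlgebra ℤ G) : nR (a + b) ≤ nR a + nR b :=
  fsum_le_add _ rfl (fun x y => Int.natAbs_add_le x y) a.coeff b.coeff

lemma nR_neg (a : MonoidAlgebra ℤ G) : nR (-a) = nR a :=
  fsum_neg _ (fun x => Int.natAbs_neg x) a.coeff

lemma nR_single (g : G) (z : ℤ) : nR (MonoidAlgebra.single g z) = z.natAbs := by
  classical
  show Finsupp.sum (Finsupp.single g z) (fun _ z => z.natAbs) = _
  exact Finsupp.sum_single_index rfl

lemma nR_single_mul (g : G) (z : ℤ) (a : MonoidAlgebra ℤ G) :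
    nR (MonoidAlgebra.single g z * a) ≤ z.natAbs * nR a := by
  classical
  have happ : ∀ y : G, (MonoidAlgebra.single g z * a).coeff y = z * a.coeff (g⁻¹ * y) :=
    fun y => MonoidAlgebra.coeff_single_mul_apply a z g y
  have hsub : (MonoidAlgebra.single g z * a).coeff.support ⊆ a.coeff.support.image (fun x => g * x) := by
    intro y hy
    have : a.coeff (g⁻¹ * y) ≠ 0 := by
      intro h; apply Finsupp.mem_support_iff.mp hy; rw [happ, h, mul_zero]
    refine Finset.mem_image.mpr ⟨g⁻¹ * y, Finsupp.mem_support_iff.mpr this, by group⟩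
  calc nR (MonoidAlgebra.single g z * a)
      = ∑ y ∈ a.coeff.support.image (fun x => g * x), ((MonoidAlgebra.single g z * a).coeff y).natAbs := by
        rw [nR, Finsupp.sum_of_support_subset _ hsub _ (fun i _ => rfl)]
    _ = ∑ x ∈ a.coeff.support, ((MonoidAlgebra.single g z * a).coeff (g * x)).natAbs := by
        rw [Finset.sum_image (fun x _ y _ h => mul_left_cancel h)]
    _ ≤ ∑ x ∈ a.coeff.support, z.natAbs * (a.coeff x).natAbs := by
        refine Finset.sum_le_sum fun x _ => ?_
        rw [happ, inv_mul_cancel_left, Int.natAbs_mul]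
    _ = z.natAbs * nR a := by rw [nR, Finsupp.sum, Finset.mul_sum]

end nR

section l1lem
variable {G : Type*} [Group G] {r s : ℕ}

lemma l1_def (x : Fin r →₀ MonoidAlgebra ℤ G) : l1 x = x.sum fun _ a => nR a := rfl

lemma l1_zero : l1 (0 : Fin r →₀ MonoidAlgebra ℤ G) = 0 := Finsupp.sum_zero_index

lemma l1_add (x y : Fin r →₀ MonoidAlgebra ℤ G) : l1 (x + y) ≤ l1 x + l1 y :=
  fsum_le_add nR nR_zero nR_add x y

lemma l1_neg (x : Fin r →₀ MonoidAlgebra ℤ G) : l1 (-x) = l1 x :=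
  fsum_neg nR nR_neg x

lemma l1_single (i : Fin r) (a : MonoidAlgebra ℤ G) : l1 (Finsupp.single i a) = nR a := by
  classical
  rw [l1_def]
  exact Finsupp.sum_single_index nR_zero

lemma l1_smul_single (g : G) (z : ℤ) (y : Fin r →₀ MonoidAlgebra ℤ G) :
    l1 ((MonoidAlgebra.single g z : MonoidAlgebra ℤ G) • y) ≤ z.natAbs * l1 y := by
  classical
  rw [l1_def, Finsupp.sum_of_support_subset _ (Finsupp.support_smul) _ (fun i _ => nR_zero)]
  calc ∑ j ∈ y.support, nR (((MonoidAlgebra.single g z : MonoidAlgebra ℤ G) • y) j)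
      ≤ ∑ j ∈ y.support, z.natAbs * nR (y j) := by
        refine Finset.sum_le_sum fun j _ => ?_
        rw [Finsupp.smul_apply, smul_eq_mul]
        exact nR_single_mul g z (y j)
    _ = z.natAbs * l1 y := by rw [l1_def, Finsupp.sum, Finset.mul_sum]

lemma MA_single_eq (g : G) (z : ℤ) :
    (MonoidAlgebra.single g z : MonoidAlgebra ℤ G).coeff = Finsupp.single g z := rfl

/-- Boundedness of a linear map between based free modules. -/
lemma l1_bound (ψ : (Fin r →₀ MonoidAlgebra ℤ G) →ₗ[MonoidAlgebra ℤ G] (Fin s →₀ MonoidAlgebra ℤ G)) :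
    ∃ C : ℕ, ∀ x, l1 (ψ x) ≤ C * l1 x := by
  classical
  set C : ℕ := Finset.univ.sup (fun i : Fin r => l1 (ψ (Finsupp.single i 1))) with hC
  have hCi : ∀ i : Fin r, l1 (ψ (Finsupp.single i 1)) ≤ C :=
    fun i => hC ▸ Finset.le_sup (f := fun i : Fin r => l1 (ψ (Finsupp.single i 1))) (Finset.mem_univ i)
  refine ⟨C, ?_⟩
  have key : ∀ (i : Fin r) (a : MonoidAlgebra ℤ G),
      l1 (ψ (Finsupp.single i a)) ≤ C * nR a := by
    intro i a
    induction a using MonoidAlgebra.induction with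
    | zero =>
      have : (Finsupp.single i (0 : MonoidAlgebra ℤ G) : Fin r →₀ MonoidAlgebra ℤ G) = 0 :=
        Finsupp.single_zero i
      rw [this, map_zero, l1_zero, nR_zero, Nat.mul_zero]
    | single_add g z b hg hz ih =>
      have hsingle : (Finsupp.single i (MonoidAlgebra.single g z + b) :
          Fin r →₀ MonoidAlgebra ℤ G)
          = Finsupp.single i (MonoidAlgebra.single g z : MonoidAlgebra ℤ G) + Finsupp.single i b :=
        Finsupp.single_add i _ _
      have hsmul : (Finsupp.single i (MonoidAlgebra.single g z : MonoidAlgebra ℤ G)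
            : Fin r →₀ MonoidAlgebra ℤ G)
          = (MonoidAlgebra.single g z : MonoidAlgebra ℤ G) • Finsupp.single i 1 := by
        rw [Finsupp.smul_single, smul_eq_mul, mul_one]
      have h1 : l1 (ψ (Finsupp.single i (MonoidAlgebra.single g z : MonoidAlgebra ℤ G)
          : Fin r →₀ MonoidAlgebra ℤ G)) ≤ z.natAbs * C := by
        rw [hsmul, map_smul]
        exact (l1_smul_single g z _).trans (Nat.mul_le_mul_left _ (hCi i))
      have hnr : nR (MonoidAlgebra.single g z + b : MonoidAlgebra ℤ G)
          = z.natAbs + nR b := by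
        have := fsum_single_add (fun t : ℤ => t.natAbs) Int.natAbs_zero (b := z) hg
        exact this
      calc l1 (ψ (Finsupp.single i (MonoidAlgebra.single g z + b : MonoidAlgebra ℤ G)))
          ≤ l1 (ψ (Finsupp.single i (MonoidAlgebra.single g z : MonoidAlgebra ℤ G)
              : Fin r →₀ MonoidAlgebra ℤ G))
            + l1 (ψ (Finsupp.single i (b : MonoidAlgebra ℤ G))) := by
            rw [hsingle, map_add]; exact l1_add _ _
        _ ≤ z.natAbs * C + C * nR b := Nat.add_le_add h1 ih
        _ = C * (z.natAbs + nR b) := by ring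
        _ = C * nR (MonoidAlgebra.single g z + b : MonoidAlgebra ℤ G) := by rw [hnr]
  intro x
  induction x using Finsupp.induction with
  | zero => rw [map_zero, l1_zero, l1_zero, Nat.mul_zero]
  | single_add i a x hi ha ih =>
    have hx : l1 (Finsupp.single i a + x) = nR a + l1 x :=
      fsum_single_add nR nR_zero hi
    calc l1 (ψ (Finsupp.single i a + x)) ≤ l1 (ψ (Finsupp.single i a)) + l1 (ψ x) := by
          rw [map_add]; exact l1_add _ _
      _ ≤ C * nR a + C * l1 x := Nat.add_le_add (key i a) ih
      _ = C * (nR a + l1 x) := by ring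
      _ = C * l1 (Finsupp.single i a + x) := by rw [hx]

end l1lem

section fill
variable {G : Type*} [Group G] {r s : ℕ}
  {M N : Type*} [AddCommGroup M] [Module (MonoidAlgebra ℤ G) M]
  [AddCommGroup N] [Module (MonoidAlgebra ℤ G) N]
  (η : (Fin r →₀ MonoidAlgebra ℤ G) →ₗ[MonoidAlgebra ℤ G] M)

lemma fillNorm_le {x : Fin r →₀ MonoidAlgebra ℤ G} {m : M} (h : η x = m) :
    fillNorm η m ≤ l1 x :=
  Nat.sInf_le ⟨x, h, rfl⟩

lemma fillNorm_spec (hη : Function.Surjective η) (m : M) :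
    ∃ x, η x = m ∧ l1 x = fillNorm η m := by
  have hne : {n : ℕ | ∃ x, η x = m ∧ l1 x = n}.Nonempty := by
    obtain ⟨x, hx⟩ := hη m
    exact ⟨l1 x, x, hx, rfl⟩
  exact Nat.sInf_mem hne

lemma fillNorm_add (hη : Function.Surjective η) (a b : M) :
    fillNorm η (a + b) ≤ fillNorm η a + fillNorm η b := by
  obtain ⟨x, hx, hlx⟩ := fillNorm_spec η hη a
  obtain ⟨y, hy, hly⟩ := fillNorm_spec η hη b
  calc fillNorm η (a + b) ≤ l1 (x + y) := fillNorm_le η (by rw [map_add, hx, hy])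
    _ ≤ l1 x + l1 y := l1_add x y
    _ = _ := by rw [hlx, hly]

lemma fillNorm_neg (hη : Function.Surjective η) (a : M) :
    fillNorm η (-a) ≤ fillNorm η a := by
  obtain ⟨x, hx, hlx⟩ := fillNorm_spec η hη a
  calc fillNorm η (-a) ≤ l1 (-x) := fillNorm_le η (by rw [map_neg, hx])
    _ = l1 x := l1_neg x
    _ = _ := hlx

lemma fillNorm_sub (hη : Function.Surjective η) (a b : M) :
    fillNorm η (a - b) ≤ fillNorm η a + fillNorm η b := by
  rw [sub_eq_add_neg]
  exact (fillNorm_add η hη a (-b)).trans (Nat.add_le_add_left (fillNorm_neg η hη b) _)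

/-- Lemma B: any linear map is bounded w.r.t. filling norms. -/
lemma fillNorm_map_bound
    (ηM : (Fin r →₀ MonoidAlgebra ℤ G) →ₗ[MonoidAlgebra ℤ G] M)
    (hM : Function.Surjective ηM)
    (ηN : (Fin s →₀ MonoidAlgebra ℤ G) →ₗ[MonoidAlgebra ℤ G] N)
    (hN : Function.Surjective ηN)
    (φ : M →ₗ[MonoidAlgebra ℤ G] N) :
    ∃ C : ℕ, ∀ a, fillNorm ηN (φ a) ≤ C * fillNorm ηM a := by
  obtain ⟨ψ, hψ⟩ := Module.projective_lifting_property ηN (φ ∘ₗ ηM) hN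
  obtain ⟨C, hC⟩ := l1_bound ψ
  refine ⟨C, fun a => ?_⟩
  obtain ⟨x, hx, hlx⟩ := fillNorm_spec ηM hM a
  have hηψ : ηN (ψ x) = φ a := by
    have := congrArg (fun f => f x) hψ
    simpa [hx] using this
  calc fillNorm ηN (φ a) ≤ l1 (ψ x) := fillNorm_le ηN hηψ
    _ ≤ C * l1 x := hC x
    _ = C * fillNorm ηM a := by rw [hlx]

variable {A B Cc : Type*} [AddCommGroup A] [Module (MonoidAlgebra ℤ G) A]
  [AddCommGroup B] [Module (MonoidAlgebra ℤ G) B]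
  [AddCommGroup Cc] [Module (MonoidAlgebra ℤ G) Cc] {r1 rn : ℕ}

lemma bdryNorm_le (d : A →ₗ[MonoidAlgebra ℤ G] B)
    (η : (Fin r →₀ MonoidAlgebra ℤ G) →ₗ[MonoidAlgebra ℤ G] A) {μ : A} {γ : B}
    (h : d μ = γ) : bdryNorm d η γ ≤ fillNorm η μ :=
  Nat.sInf_le ⟨μ, h, rfl⟩

lemma bdryNorm_spec (d : A →ₗ[MonoidAlgebra ℤ G] B)
    (η : (Fin r →₀ MonoidAlgebra ℤ G) →ₗ[MonoidAlgebra ℤ G] A) {γ : B}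
    (h : γ ∈ LinearMap.range d) :
    ∃ μ, d μ = γ ∧ fillNorm η μ = bdryNorm d η γ := by
  obtain ⟨μ, hμ⟩ := h
  have hne : {c : ℕ | ∃ μ, d μ = γ ∧ fillNorm η μ = c}.Nonempty := ⟨fillNorm η μ, μ, hμ, rfl⟩
  exact Nat.sInf_mem hne

lemma le_FVfun (d1 : A →ₗ[MonoidAlgebra ℤ G] B) (dn : B →ₗ[MonoidAlgebra ℤ G] Cc)
    (ηn : (Fin rn →₀ MonoidAlgebra ℤ G) →ₗ[MonoidAlgebra ℤ G] B)
    (η1 : (Fin r1 →₀ MonoidAlgebra ℤ G) →ₗ[MonoidAlgebra ℤ G] A)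
    {k : ℕ} {γ : B} (hγ : dn γ = 0) (hk : fillNorm ηn γ ≤ k) :
    (bdryNorm d1 η1 γ : ℕ∞) ≤ FVfun d1 dn ηn η1 k :=
  le_sSup ⟨γ, LinearMap.mem_ker.mpr hγ, hk, rfl⟩

lemma FVfun_le (d1 : A →ₗ[MonoidAlgebra ℤ G] B) (dn : B →ₗ[MonoidAlgebra ℤ G] Cc)
    (ηn : (Fin rn →₀ MonoidAlgebra ℤ G) →ₗ[MonoidAlgebra ℤ G] B)
    (η1 : (Fin r1 →₀ MonoidAlgebra ℤ G) →ₗ[MonoidAlgebra ℤ G] A)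
    {k : ℕ} {c : ℕ∞}
    (h : ∀ γ : B, dn γ = 0 → fillNorm ηn γ ≤ k → (bdryNorm d1 η1 γ : ℕ∞) ≤ c) :
    FVfun d1 dn ηn η1 k ≤ c := by
  refine sSup_le ?_
  rintro x ⟨γ, hγ, hk, rfl⟩
  exact h γ (LinearMap.mem_ker.mp hγ) hk

lemma FVfun_mono (d1 : A →ₗ[MonoidAlgebra ℤ G] B) (dn : B →ₗ[MonoidAlgebra ℤ G] Cc)
    (ηn : (Fin rn →₀ MonoidAlgebra ℤ G) →ₗ[MonoidAlgebra ℤ G] B)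
    (η1 : (Fin r1 →₀ MonoidAlgebra ℤ G) →ₗ[MonoidAlgebra ℤ G] A)
    {k k' : ℕ} (h : k ≤ k') :
    FVfun d1 dn ηn η1 k ≤ FVfun d1 dn ηn η1 k' := by
  refine sSup_le_sSup ?_
  rintro x ⟨γ, hγ, hk, rfl⟩
  exact ⟨γ, hγ, hk.trans h, rfl⟩

end fill

section chain
variable {R : Type*} [Ring R]

lemma exists_lift {Q A B : Type*} [AddCommGroup Q] [Module R Q]
    [AddCommGroup A] [Module R A] [AddCommGroup B] [Module R B]
    [Module.Projective R Q] (d : A →ₗ[R] B) (φ : Q →ₗ[R] B)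
    (h : ∀ q, φ q ∈ LinearMap.range d) : ∃ ψ : Q →ₗ[R] A, d ∘ₗ ψ = φ := by
  obtain ⟨ψ, hψ⟩ := Module.projective_lifting_property d.rangeRestrict
    (φ.codRestrict (LinearMap.range d) h) d.surjective_rangeRestrict
  refine ⟨ψ, ?_⟩
  ext q
  have := congrArg (fun f => ((f : Q →ₗ[R] LinearMap.range d) q : B)) hψ
  simpa using this

variable (m : ℕ) (F P : ℕ → Type*) {Z : Type*}
    [∀ i, AddCommGroup (F i)] [∀ i, Module R (F i)]
    [∀ i, AddCommGroup (P i)] [∀ i, Module R (P i)]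
    [AddCommGroup Z] [Module R Z]
    (dF : ∀ i, F (i + 1) →ₗ[R] F i)
    (dP : ∀ i, P (i + 1) →ₗ[R] P i)
    (εF : F 0 →ₗ[R] Z) (εP : P 0 →ₗ[R] Z)

/-- Fundamental lemma of homological algebra: chain map existence. -/
lemma chain_map_exists
    (hFproj : ∀ i ≤ m + 2, Module.Projective R (F i))
    (hF0 : LinearMap.range (dF 0) = LinearMap.ker εF)
    (hFex : ∀ i, i + 1 ≤ m + 1 → LinearMap.range (dF (i + 1)) = LinearMap.ker (dF i))
    (hεP : Function.Surjective εP)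
    (hP0 : LinearMap.range (dP 0) = LinearMap.ker εP)
    (hPex : ∀ i, i + 1 ≤ m + 1 → LinearMap.range (dP (i + 1)) = LinearMap.ker (dP i)) :
    ∃ f : ∀ i, F i →ₗ[R] P i, εP ∘ₗ f 0 = εF ∧
      ∀ i ≤ m + 1, dP i ∘ₗ f (i + 1) = f i ∘ₗ dF i := by
  classical
  have main : ∀ N : ℕ, ∃ f : ∀ i, F i →ₗ[R] P i, εP ∘ₗ f 0 = εF ∧
      ∀ i, i < N → i ≤ m + 1 → dP i ∘ₗ f (i + 1) = f i ∘ₗ dF i := by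
    intro N
    induction N with
    | zero =>
      have : Module.Projective R (F 0) := hFproj 0 (by omega)
      obtain ⟨f0, hf0⟩ := Module.projective_lifting_property εP εF hεP
      exact ⟨fun i => Nat.rec f0 (fun _ _ => 0) i, hf0, fun i hi => absurd hi (Nat.not_lt_zero i)⟩
    | succ N ih =>
      obtain ⟨f, hf0, hf⟩ := ih
      by_cases hN : N ≤ m + 1
      · -- construct the lift at degree N+1
        have : Module.Projective R (F (N + 1)) := hFproj (N + 1) (by omega)
        have hrange : ∀ q, (f N ∘ₗ dF N) q ∈ LinearMap.range (dP N) := by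
          intro q
          match N, hN, hf0, hf with
          | 0, hN, hf0, hf =>
            rw [hP0, LinearMap.mem_ker]
            have h1 : εP (f 0 (dF 0 q)) = εF (dF 0 q) := congrArg (fun g => g (dF 0 q)) hf0
            have h2 : εF (dF 0 q) = 0 := by
              have : dF 0 q ∈ LinearMap.ker εF := hF0 ▸ LinearMap.mem_range_self _ q
              exact LinearMap.mem_ker.mp this
            simpa [h1] using h2
          | (j+1), hN, hf0, hf =>
            rw [hPex j (by omega), LinearMap.mem_ker]
            have hcomm : dP j ∘ₗ f (j + 1) = f j ∘ₗ dF j := hf j (by omega) (by omega)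
            have h1 : dP j (f (j + 1) (dF (j+1) q)) = f j (dF j (dF (j+1) q)) :=
              congrArg (fun g => g (dF (j+1) q)) hcomm
            have h2 : dF j (dF (j+1) q) = 0 :=
              LinearMap.mem_ker.mp (hFex j (by omega) ▸ LinearMap.mem_range_self _ q)
            simp [h1, h2]
        obtain ⟨ψ, hψ⟩ := exists_lift (dP N) (f N ∘ₗ dF N) hrange
        refine ⟨Function.update f (N + 1) ψ, ?_, ?_⟩
        · rwa [Function.update_of_ne (by omega)]
        · intro i hi him
          rcases Nat.lt_succ_iff_lt_or_eq.mp hi with hi' | rfl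
          · rw [Function.update_of_ne (by omega), Function.update_of_ne (by omega)]
            exact hf i hi' him
          · rw [Function.update_self, Function.update_of_ne (by omega)]
            exact hψ
      · exact ⟨f, hf0, fun i hi him => hf i (by omega) him⟩
  obtain ⟨f, hf0, hf⟩ := main (m + 2)
  exact ⟨f, hf0, fun i hi => hf i (by omega) hi⟩

end chain

section chain
variable {R : Type*} [Ring R]
variable (m : ℕ) (F P : ℕ → Type*) {Z : Type*}
    [∀ i, AddCommGroup (F i)] [∀ i, Module R (F i)]
    [∀ i, AddCommGroup (P i)] [∀ i, Module R (P i)]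
    [AddCommGroup Z] [Module R Z]
    (dF : ∀ i, F (i + 1) →ₗ[R] F i)
    (dP : ∀ i, P (i + 1) →ₗ[R] P i)
    (εF : F 0 →ₗ[R] Z) (εP : P 0 →ₗ[R] Z)

/-- Chain homotopy between `g ∘ f` and the identity on the `F` resolution. -/
lemma homotopy_exists
    (hFproj : ∀ i ≤ m + 2, Module.Projective R (F i))
    (hF0 : LinearMap.range (dF 0) = LinearMap.ker εF)
    (hFex : ∀ i, i + 1 ≤ m + 1 → LinearMap.range (dF (i + 1)) = LinearMap.ker (dF i))
    (f : ∀ i, F i →ₗ[R] P i) (g : ∀ i, P i →ₗ[R] F i)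
    (hf0 : εP ∘ₗ f 0 = εF)
    (hfc : ∀ i ≤ m + 1, dP i ∘ₗ f (i + 1) = f i ∘ₗ dF i)
    (hg0 : εF ∘ₗ g 0 = εP)
    (hgc : ∀ i ≤ m + 1, dF i ∘ₗ g (i + 1) = g i ∘ₗ dP i) :
    ∃ h : ∀ i, F i →ₗ[R] F (i + 1),
      dF 0 ∘ₗ h 0 = g 0 ∘ₗ f 0 - LinearMap.id ∧
      ∀ i, i + 1 ≤ m + 1 →
        dF (i + 1) ∘ₗ h (i + 1) = g (i + 1) ∘ₗ f (i + 1) - LinearMap.id - h i ∘ₗ dF i := by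
  classical
  have hbase : ∃ h0 : F 0 →ₗ[R] F 1, dF 0 ∘ₗ h0 = g 0 ∘ₗ f 0 - LinearMap.id := by
    have : Module.Projective R (F 0) := hFproj 0 (by omega)
    refine exists_lift (dF 0) (g 0 ∘ₗ f 0 - LinearMap.id) ?_
    intro q
    rw [hF0, LinearMap.mem_ker]
    have h1 : εF (g 0 (f 0 q)) = εP (f 0 q) := congrArg (fun t => t (f 0 q)) hg0
    have h2 : εP (f 0 q) = εF q := congrArg (fun t => t q) hf0
    simp [LinearMap.sub_apply, h1, h2]
  have main : ∀ N : ℕ, ∃ h : ∀ i, F i →ₗ[R] F (i + 1),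
      dF 0 ∘ₗ h 0 = g 0 ∘ₗ f 0 - LinearMap.id ∧
      ∀ i, i < N → i + 1 ≤ m + 1 →
        dF (i + 1) ∘ₗ h (i + 1) = g (i + 1) ∘ₗ f (i + 1) - LinearMap.id - h i ∘ₗ dF i := by
    intro N
    induction N with
    | zero =>
      obtain ⟨h0, hh0⟩ := hbase
      exact ⟨fun i => Nat.rec h0 (fun _ _ => 0) i, hh0, fun i hi => absurd hi (Nat.not_lt_zero i)⟩
    | succ N ih =>
      obtain ⟨h, hh0, hh⟩ := ih
      by_cases hN : N + 1 ≤ m + 1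
      · have : Module.Projective R (F (N + 1)) := hFproj (N + 1) (by omega)
        have hB : ∀ u : F (N + 1),
            dF N (h N (dF N u)) = g N (f N (dF N u)) - dF N u := by
          match N, hN, hh with
          | 0, hN, hh =>
            intro u
            have := congrArg (fun w => w (dF 0 u)) hh0
            simpa using this
          | (j+1), hN, hh =>
            intro u
            have hc := hh j (by omega) (by omega)
            have hcu := congrArg (fun w => w (dF (j+1) u)) hc
            simp only [LinearMap.comp_apply, LinearMap.sub_apply, LinearMap.id_apply] at hcu
            have hz : dF j (dF (j+1) u) = 0 :=
              LinearMap.mem_ker.mp (hFex j (by omega) ▸ LinearMap.mem_range_self _ u)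
            rw [hz, map_zero, sub_zero] at hcu
            exact hcu
        have hker : ∀ q : F (N + 1),
            ((g (N + 1) ∘ₗ f (N + 1) - LinearMap.id - h N ∘ₗ dF N :
              F (N + 1) →ₗ[R] F (N + 1))) q ∈
              LinearMap.range (dF (N + 1)) := by
          intro q
          rw [hFex N hN, LinearMap.mem_ker]
          have hA : dF N (g (N + 1) (f (N + 1) q)) = g N (f N (dF N q)) := by
            have h1 := congrArg (fun w => w (f (N + 1) q)) (hgc N (by omega))
            have h2 := congrArg (fun w => w q) (hfc N (by omega))
            simp only [LinearMap.comp_apply] at h1 h2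
            rw [h1, h2]
          simp only [LinearMap.sub_apply, LinearMap.comp_apply, LinearMap.id_apply, map_sub]
          rw [hA, hB q]
          abel
        obtain ⟨ψ, hψ⟩ := exists_lift (dF (N + 1))
          (g (N + 1) ∘ₗ f (N + 1) - LinearMap.id - h N ∘ₗ dF N) hker
        refine ⟨Function.update h (N + 1) ψ, ?_, ?_⟩
        · rwa [Function.update_of_ne (by omega)]
        · intro i hi him
          rcases Nat.lt_succ_iff_lt_or_eq.mp hi with hi' | rfl
          · rw [Function.update_of_ne (by omega), Function.update_of_ne (by omega)]
            exact hh i hi' him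
          · rw [Function.update_self, Function.update_of_ne (by omega)]
            exact hψ
      · exact ⟨h, hh0, fun i hi him => hh i (by omega) him⟩
  obtain ⟨h, hh0, hh⟩ := main (m + 1)
  exact ⟨h, hh0, fun i hi => hh i (by omega) hi⟩

end chain

/-- One direction of the well-definedness. -/
lemma FVfun_oneSide
    (G : Type*) [Group G] (m : ℕ)
    (F P : ℕ → Type*) {Z : Type*}
    [∀ i, AddCommGroup (F i)] [∀ i, Module (MonoidAlgebra ℤ G) (F i)]
    [∀ i, AddCommGroup (P i)] [∀ i, Module (MonoidAlgebra ℤ G) (P i)]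
    [AddCommGroup Z] [Module (MonoidAlgebra ℤ G) Z]
    (dF : ∀ i, F (i + 1) →ₗ[MonoidAlgebra ℤ G] F i)
    (dP : ∀ i, P (i + 1) →ₗ[MonoidAlgebra ℤ G] P i)
    (εF : F 0 →ₗ[MonoidAlgebra ℤ G] Z)
    (εP : P 0 →ₗ[MonoidAlgebra ℤ G] Z)
    (hFproj : ∀ i ≤ m + 2, Module.Projective (MonoidAlgebra ℤ G) (F i))
    (hPproj : ∀ i ≤ m + 2, Module.Projective (MonoidAlgebra ℤ G) (P i))
    (hεF : Function.Surjective εF)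
    (hF0 : LinearMap.range (dF 0) = LinearMap.ker εF)
    (hFex : ∀ i, i + 1 ≤ m + 1 →
      LinearMap.range (dF (i + 1)) = LinearMap.ker (dF i))
    (hεP : Function.Surjective εP)
    (hP0 : LinearMap.range (dP 0) = LinearMap.ker εP)
    (hPex : ∀ i, i + 1 ≤ m + 1 →
      LinearMap.range (dP (i + 1)) = LinearMap.ker (dP i))
    {rFn rFn1 rPn rPn1 : ℕ}
    (ηFn : (Fin rFn →₀ MonoidAlgebra ℤ G) →ₗ[MonoidAlgebra ℤ G] F (m + 1))
    (hηFn : Function.Surjective ηFn)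
    (ηFn1 : (Fin rFn1 →₀ MonoidAlgebra ℤ G) →ₗ[MonoidAlgebra ℤ G] F (m + 2))
    (hηFn1 : Function.Surjective ηFn1)
    (ηPn : (Fin rPn →₀ MonoidAlgebra ℤ G) →ₗ[MonoidAlgebra ℤ G] P (m + 1))
    (hηPn : Function.Surjective ηPn)
    (ηPn1 : (Fin rPn1 →₀ MonoidAlgebra ℤ G) →ₗ[MonoidAlgebra ℤ G] P (m + 2))
    (hηPn1 : Function.Surjective ηPn1) :
    FPreceq (FVfun (dF (m + 1)) (dF m) ηFn ηFn1)
        (FVfun (dP (m + 1)) (dP m) ηPn ηPn1) := by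
  obtain ⟨f, hf0, hfc⟩ := chain_map_exists m F P dF dP εF εP hFproj hF0 hFex hεP hP0 hPex
  obtain ⟨g, hg0, hgc⟩ := chain_map_exists m P F dP dF εP εF hPproj hP0 hPex hεF hF0 hFex
  obtain ⟨h, hh0, hhc⟩ := homotopy_exists m F P dF dP εF εP hFproj hF0 hFex
    f g hf0 hfc hg0 hgc
  obtain ⟨C1, hC1⟩ := fillNorm_map_bound ηFn hηFn ηPn hηPn (f (m + 1))
  obtain ⟨C2, hC2⟩ := fillNorm_map_bound ηPn1 hηPn1 ηFn1 hηFn1 (g (m + 2))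
  obtain ⟨C3, hC3⟩ := fillNorm_map_bound ηFn hηFn ηFn1 hηFn1 (h (m + 1))
  set C : ℕ := C1 + C2 + C3 + 1 with hCdef
  refine ⟨C, by omega, fun k => ?_⟩
  refine FVfun_le _ _ _ _ (fun γ hγ hk => ?_)
  -- push γ into the P resolution
  set γ' : P (m + 1) := f (m + 1) γ with hγ'def
  have hγ' : dP m γ' = 0 := by
    have := congrArg (fun w => w γ) (hfc m (by omega))
    simp only [LinearMap.comp_apply] at this
    rw [hγ'def, this, hγ, map_zero]
  have hfillγ' : fillNorm ηPn γ' ≤ C1 * k :=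
    (hC1 γ).trans (Nat.mul_le_mul_left _ hk)
  have hmem : (bdryNorm (dP (m + 1)) ηPn1 γ' : ℕ∞) ≤
      FVfun (dP (m + 1)) (dP m) ηPn ηPn1 (C1 * k) :=
    le_FVfun _ _ _ _ hγ' hfillγ'
  have hFVP : FVfun (dP (m + 1)) (dP m) ηPn ηPn1 (C1 * k) ≤
      FVfun (dP (m + 1)) (dP m) ηPn ηPn1 (C * k + C) :=
    FVfun_mono _ _ _ _ (by have : C1 * k ≤ C * k := Nat.mul_le_mul_right k (by omega); omega)
  -- fill γ' in P
  obtain ⟨ν, hν, hfillν⟩ := bdryNorm_spec (dP (m + 1)) ηPn1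
    (γ := γ') (by rw [hPex m le_rfl]; exact LinearMap.mem_ker.mpr hγ')
  -- pull back the filling
  set μ : F (m + 2) := g (m + 2) ν - h (m + 1) γ with hμdef
  have hdμ : dF (m + 1) μ = γ := by
    have h1 : dF (m + 1) (g (m + 2) ν) = g (m + 1) (f (m + 1) γ) := by
      have := congrArg (fun w => w ν) (hgc (m + 1) le_rfl)
      simp only [LinearMap.comp_apply] at this
      rw [this, hν]
    have h2 : dF (m + 1) (h (m + 1) γ) = g (m + 1) (f (m + 1) γ) - γ := by
      have := congrArg (fun w => w γ) (hhc m le_rfl)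
      simp only [LinearMap.comp_apply, LinearMap.sub_apply, LinearMap.id_apply] at this
      rw [this, hγ, map_zero, sub_zero]
    rw [hμdef, map_sub, h1, h2]
    abel
  have hbound : bdryNorm (dF (m + 1)) ηFn1 γ ≤
      C2 * bdryNorm (dP (m + 1)) ηPn1 γ' + C3 * k := by
    calc bdryNorm (dF (m + 1)) ηFn1 γ ≤ fillNorm ηFn1 μ := bdryNorm_le _ _ hdμ
      _ ≤ fillNorm ηFn1 (g (m + 2) ν) + fillNorm ηFn1 (h (m + 1) γ) :=
          fillNorm_sub ηFn1 hηFn1 _ _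
      _ ≤ C2 * fillNorm ηPn1 ν + C3 * fillNorm ηFn γ := Nat.add_le_add (hC2 ν) (hC3 γ)
      _ ≤ C2 * bdryNorm (dP (m + 1)) ηPn1 γ' + C3 * k := by
          rw [hfillν]; exact Nat.add_le_add le_rfl (Nat.mul_le_mul_left _ hk)
  -- final estimate in ℕ∞
  have hD : (bdryNorm (dP (m + 1)) ηPn1 γ' : ℕ∞) ≤
      FVfun (dP (m + 1)) (dP m) ηPn ηPn1 (C * k + C) := hmem.trans hFVP
  calc (bdryNorm (dF (m + 1)) ηFn1 γ : ℕ∞)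
      ≤ (C2 : ℕ∞) * (bdryNorm (dP (m + 1)) ηPn1 γ' : ℕ∞) + (C3 : ℕ∞) * (k : ℕ∞) := by
        exact_mod_cast Nat.cast_le.mpr hbound
    _ ≤ (C : ℕ∞) * FVfun (dP (m + 1)) (dP m) ηPn ηPn1 (C * k + C) + (C : ℕ∞) * (k : ℕ∞) := by
        refine add_le_add (mul_le_mul' (Nat.cast_le.mpr (by omega)) hD)
          (mul_le_mul' (Nat.cast_le.mpr (by omega)) le_rfl)
    _ ≤ (C : ℕ∞) * FVfun (dP (m + 1)) (dP m) ηPn ηPn1 (C * k + C) + (C : ℕ∞) * (k : ℕ∞)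
        + (C : ℕ∞) := self_le_add_right _ _

end AuxLemmas

/-- Well-definedness of the algebraic homological filling function: the filling
functions of any two `FP_{n+1}`-resolutions `(F_*, ∂_*)` and `(P_*, δ_*)` of `ℤ`
over `ℤ[G]` (with `n = m + 1 ≥ 1`), computed with respect to any chosen filling
norms on the degree-`n` and degree-`(n+1)` modules, are linearly equivalent. -/
theorem algebraic_filling_function_well_defined
    (G : Type*) [Group G] (m : ℕ)
    (F P : ℕ → Type*)
    [∀ i, AddCommGroup (F i)] [∀ i, Module (MonoidAlgebra ℤ G) (F i)]
    [∀ i, AddCommGroup (P i)] [∀ i, Module (MonoidAlgebra ℤ G) (P i)]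
    (dF : ∀ i, F (i + 1) →ₗ[MonoidAlgebra ℤ G] F i)
    (dP : ∀ i, P (i + 1) →ₗ[MonoidAlgebra ℤ G] P i)
    (εF : F 0 →ₗ[MonoidAlgebra ℤ G] TrivialZ G)
    (εP : P 0 →ₗ[MonoidAlgebra ℤ G] TrivialZ G)
    -- each module in degrees 0, …, n+1 = m+2 is finitely generated projective
    (hFproj : ∀ i ≤ m + 2, Module.Projective (MonoidAlgebra ℤ G) (F i))
    (hFfin : ∀ i ≤ m + 2, Module.Finite (MonoidAlgebra ℤ G) (F i))
    (hPproj : ∀ i ≤ m + 2, Module.Projective (MonoidAlgebra ℤ G) (P i))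
    (hPfin : ∀ i ≤ m + 2, Module.Finite (MonoidAlgebra ℤ G) (P i))
    -- exactness of (F_*, ∂_*) at ℤ and at F_0, …, F_n
    (hεF : Function.Surjective εF)
    (hF0 : LinearMap.range (dF 0) = LinearMap.ker εF)
    (hFex : ∀ i, i + 1 ≤ m + 1 →
      LinearMap.range (dF (i + 1)) = LinearMap.ker (dF i))
    -- exactness of (P_*, δ_*) at ℤ and at P_0, …, P_n
    (hεP : Function.Surjective εP)
    (hP0 : LinearMap.range (dP 0) = LinearMap.ker εP)
    (hPex : ∀ i, i + 1 ≤ m + 1 →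
      LinearMap.range (dP (i + 1)) = LinearMap.ker (dP i))
    -- chosen filling norms on the degree-n and degree-(n+1) modules
    (rFn rFn1 rPn rPn1 : ℕ)
    (ηFn : (Fin rFn →₀ MonoidAlgebra ℤ G) →ₗ[MonoidAlgebra ℤ G] F (m + 1))
    (hηFn : Function.Surjective ηFn)
    (ηFn1 : (Fin rFn1 →₀ MonoidAlgebra ℤ G) →ₗ[MonoidAlgebra ℤ G] F (m + 2))
    (hηFn1 : Function.Surjective ηFn1)
    (ηPn : (Fin rPn →₀ MonoidAlgebra ℤ G) →ₗ[MonoidAlgebra ℤ G] P (m + 1))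
    (hηPn : Function.Surjective ηPn)
    (ηPn1 : (Fin rPn1 →₀ MonoidAlgebra ℤ G) →ₗ[MonoidAlgebra ℤ G] P (m + 2))
    (hηPn1 : Function.Surjective ηPn1) :
    FPreceq (FVfun (dF (m + 1)) (dF m) ηFn ηFn1)
        (FVfun (dP (m + 1)) (dP m) ηPn ηPn1) ∧
    FPreceq (FVfun (dP (m + 1)) (dP m) ηPn ηPn1)
        (FVfun (dF (m + 1)) (dF m) ηFn ηFn1) := by
  exact ⟨FVfun_oneSide G m F P dF dP εF εP hFproj hPproj hεF hF0 hFex hεP hP0 hPex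
      ηFn hηFn ηFn1 hηFn1 ηPn hηPn ηPn1 hηPn1,
    FVfun_oneSide G m P F dP dF εP εF hPproj hFproj hεP hP0 hPex hεF hF0 hFex
      ηPn hηPn ηPn1 hηPn1 ηFn hηFn ηFn1 hηFn1⟩
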